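/- Let A ∈ ℂ^{n×n} Hermitian positive definite, Ψ ∈ ℂ^{n×m} with Ψ ≠ 0, and P > 0. If there exists μ* ≥ 0 such that Tr((A+μ*I)^{−1}ΨΨ^H(A+μ*I)^{−1}) = P, then Y* = (A+μ*I)^{−1}Ψ is the unique global minimizer of Tr(Y^H A Y) − 2Re Tr(Ψ^H Y) subject to Tr(YY^H) = P among stationary points with nonnegative multiplier. -/
import Mathlib


open Matrix
open scoped ComplexOrder

/-- For Hermitian positive definite `A`, `Ψ ≠ 0`, `P > 0`: if `μ* ≥ 0` satisfies
`Tr((A+μ*I)⁻¹ΨΨᴴ(A+μ*I)⁻¹) = P`, then `Y* = (A+μ*I)⁻¹Ψ` is the unique global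
minimizer of `Tr(YᴴAY) − 2Re Tr(ΨᴴY)` subject to `Tr(YYᴴ) = P` among stationary
points (i.e. `Y` with `(A+μI)Y = Ψ` for some multiplier `μ ≥ 0`). -/
theorem stmt_9 (n m : ℕ) (A : Matrix (Fin n) (Fin n) ℂ) (hA : A.PosDef)
    (Ψ : Matrix (Fin n) (Fin m) ℂ) (hΨ : Ψ ≠ 0) (P : ℝ) (hP : 0 < P)
    (μstar : ℝ) (hμ : 0 ≤ μstar)
    (hfeas : (Matrix.trace
        ((A + (μstar : ℂ) • (1 : Matrix (Fin n) (Fin n) ℂ))⁻¹ * Ψ * Ψᴴ *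
          (A + (μstar : ℂ) • (1 : Matrix (Fin n) (Fin n) ℂ))⁻¹)).re = P) :
    let f : Matrix (Fin n) (Fin m) ℂ → ℝ := fun Y =>
      (Matrix.trace (Yᴴ * A * Y)).re - 2 * (Matrix.trace (Ψᴴ * Y)).re
    let Ystar : Matrix (Fin n) (Fin m) ℂ :=
      (A + (μstar : ℂ) • (1 : Matrix (Fin n) (Fin n) ℂ))⁻¹ * Ψ
    (Matrix.trace (Ystar * Ystarᴴ)).re = P ∧
    (A + (μstar : ℂ) • (1 : Matrix (Fin n) (Fin n) ℂ)) * Ystar = Ψ ∧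
    ∀ Y : Matrix (Fin n) (Fin m) ℂ,
      (Matrix.trace (Y * Yᴴ)).re = P →
      (∃ μ : ℝ, 0 ≤ μ ∧
        (A + (μ : ℂ) • (1 : Matrix (Fin n) (Fin n) ℂ)) * Y = Ψ) →
      f Ystar ≤ f Y ∧ (f Y = f Ystar → Y = Ystar) := by
  intro f Ystar
  set B : Matrix (Fin n) (Fin n) ℂ := A + (μstar : ℂ) • 1 with hBdef
  have hBpd : B.PosDef := by
    apply hA.add_posSemidef
    rw [smul_one_eq_diagonal]
    exact posSemidef_diagonal_iff.mpr fun i =>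
      (Complex.zero_le_real).mpr hμ
  have hBH : Bᴴ = B := hBpd.isHermitian
  have hBU : IsUnit B := hBpd.isUnit
  have hBinv : B * B⁻¹ = 1 := mul_nonsing_inv B ((isUnit_iff_isUnit_det _).mp hBU)
  have h2 : B * Ystar = Ψ := by
    show B * (B⁻¹ * Ψ) = Ψ
    rw [← Matrix.mul_assoc, hBinv, Matrix.one_mul]
  have hinvH : (B⁻¹)ᴴ = B⁻¹ := by rw [conjTranspose_nonsing_inv, hBH]
  have h1 : (Matrix.trace (Ystar * Ystarᴴ)).re = P := by
    show (Matrix.trace (B⁻¹ * Ψ * (B⁻¹ * Ψ)ᴴ)).re = P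
    rw [conjTranspose_mul, hinvH, ← hfeas, ← Matrix.mul_assoc]
  refine ⟨h1, h2, ?_⟩
  intro Y hY _
  -- key inequality
  have trace_col : ∀ D : Matrix (Fin n) (Fin m) ℂ,
      Matrix.trace (Dᴴ * B * D) = ∑ j, star (fun i => D i j) ⬝ᵥ (B *ᵥ fun i => D i j) := by
    intro D
    simp only [Matrix.trace, Matrix.mul_apply, dotProduct, mulVec, Matrix.diag,
      conjTranspose_apply, Pi.star_apply, RCLike.star_def, Finset.mul_sum, Finset.sum_mul]
    refine Finset.sum_congr rfl fun j _ => ?_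
    rw [Finset.sum_comm]
    exact Finset.sum_congr rfl fun i _ => Finset.sum_congr rfl fun k _ => by ring
  have key : ∀ D : Matrix (Fin n) (Fin m) ℂ, 0 ≤ (Matrix.trace (Dᴴ * B * D)).re ∧
      (D ≠ 0 → 0 < (Matrix.trace (Dᴴ * B * D)).re) := by
    intro D
    rw [trace_col D, Complex.re_sum]
    constructor
    · exact Finset.sum_nonneg fun j _ => hBpd.posSemidef.re_dotProduct_nonneg _
    · intro hD
      obtain ⟨i, j, hij⟩ : ∃ i j, D i j ≠ 0 := by
        by_contra h
        push_neg at h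
        exact hD (by ext i j; simp [h])
      refine Finset.sum_pos' (fun j _ => hBpd.posSemidef.re_dotProduct_nonneg _)
        ⟨j, Finset.mem_univ j, hBpd.re_dotProduct_pos ?_⟩
      intro hcol
      exact hij (congrFun hcol i)
  -- algebra: f Y - f Ystar = re trace(DᴴBD) with D = Y - Ystar
  set D : Matrix (Fin n) (Fin m) ℂ := Y - Ystar with hD
  have hΨY : Matrix.trace (Ψᴴ * Y) = Matrix.trace (Ystarᴴ * B * Y) := by
    rw [← h2, conjTranspose_mul, hBH]
  have hΨYs : Matrix.trace (Ψᴴ * Ystar) = Matrix.trace (Ystarᴴ * B * Ystar) := by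
    rw [← h2, conjTranspose_mul, hBH]
  have hconj : (Matrix.trace (Yᴴ * B * Ystar)).re = (Matrix.trace (Ystarᴴ * B * Y)).re := by
    have : Yᴴ * B * Ystar = (Ystarᴴ * B * Y)ᴴ := by
      simp [conjTranspose_mul, hBH, Matrix.mul_assoc]
    rw [this, trace_conjTranspose]
    simp
  have expand : Matrix.trace (Dᴴ * B * D) =
      Matrix.trace (Yᴴ * B * Y) - Matrix.trace (Ystarᴴ * B * Y)
        - Matrix.trace (Yᴴ * B * Ystar) + Matrix.trace (Ystarᴴ * B * Ystar) := by
    rw [hD]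
    simp only [conjTranspose_sub, Matrix.sub_mul, Matrix.mul_sub, trace_sub]
    ring
  have traceB : ∀ Z : Matrix (Fin n) (Fin m) ℂ,
      (Matrix.trace (Zᴴ * B * Z)).re
        = (Matrix.trace (Zᴴ * A * Z)).re + μstar * (Matrix.trace (Z * Zᴴ)).re := by
    intro Z
    have hZ : Zᴴ * B * Z = Zᴴ * A * Z + (μstar : ℂ) • (Zᴴ * Z) := by
      rw [hBdef, Matrix.mul_add, Matrix.add_mul, Matrix.mul_smul, Matrix.smul_mul,
        Matrix.mul_one]
    rw [hZ, trace_add, trace_smul, trace_mul_comm Zᴴ Z]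
    simp [Complex.re_ofReal_mul]
  have hYs_feas : (Matrix.trace (Ystar * Ystarᴴ)).re = P := h1
  have main : (Matrix.trace (Dᴴ * B * D)).re = f Y - f Ystar := by
    have e1 := traceB Y
    have e2 := traceB Ystar
    rw [hY] at e1
    rw [hYs_feas] at e2
    simp only [f]
    rw [expand]
    simp only [Complex.add_re, Complex.sub_re]
    rw [hconj] at *
    rw [← hΨY, ← hΨYs] at *
    rw [e1, e2, ← hΨY]
    ring
  obtain ⟨knn, kpos⟩ := key D
  constructor
  · linarith [main ▸ knn]
  · intro hfeq
    by_contra hne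
    have hDne : D ≠ 0 := by
      rw [hD, sub_ne_zero]; exact hne
    have := kpos hDne
    rw [main] at this
    linarith
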